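/- arXiv:2505.15468 — 3 statements merged into one kernel-verified Lean document; each statement's English description precedes it below -/
import Mathlib

section
/- In the finite fully-branched C^{1+α} IFS setting with its dimension-δ Gibbs measure μ, assume (MNL) holds with constant C_MNL. Then for every N ≥ 1 there exist words a, b ∈ 𝒜^N such that: for every finite word c ∈ 𝒜* and every y ∈ I_c ∩ F, there exists x ∈ I_c ∩ F with |X_a(x,y) − X_b(x,y)| ≥ μ(I_c)/(3·C_MNL). -/
open MeasureTheory
open scoped ENNReal

noncomputable section

/-- The geometric part of a finite, fully-branched `C^{1+α}` iterated function system: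
finitely many `C¹` contractions `g a` of a compact interval `J = [lo, hi]` with
`0 < κm ≤ |g_a'| ≤ κp < 1` and pairwise disjoint images. -/
structure FiniteIFS where
  A : Type
  finA : Finite A
  neA : Nonempty A
  lo : ℝ
  hi : ℝ
  hlohi : lo < hi
  g : A → ℝ → ℝ
  gd : A → ℝ → ℝ
  hderiv : ∀ a, ∀ x ∈ Set.Icc lo hi, HasDerivAt (g a) (gd a x) x
  hmaps : ∀ a, Set.MapsTo (g a) (Set.Icc lo hi) (Set.Icc lo hi)
  κm : ℝ
  κp : ℝ
  hκm : 0 < κm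
  hκp : κp < 1
  hcontr : ∀ a, ∀ x ∈ Set.Icc lo hi, κm ≤ |gd a x| ∧ |gd a x| ≤ κp
  hdisj : ∀ a b : A, a ≠ b → Disjoint (g a '' Set.Icc lo hi) (g b '' Set.Icc lo hi)

namespace FiniteIFS

variable (S : FiniteIFS)

/-- The ambient compact interval `J`. -/
def J : Set ℝ := Set.Icc S.lo S.hi

/-- The composition `g_{a₁} ∘ ⋯ ∘ g_{a_n}` along a word. -/
def gW : List S.A → ℝ → ℝ
  | [], x => x
  | a :: l, x => S.g a (gW l x)

/-- The chain-rule derivative of `gW` along a word. -/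
def gD : List S.A → ℝ → ℝ
  | [], _ => 1
  | a :: l, x => S.gd a (S.gW l x) * gD l x

/-- The cylinder interval `I_a = g_a(J)`. -/
def cyl (l : List S.A) : Set ℝ := S.gW l '' S.J

/-- The attractor `F = ⋂ₙ ⋃_{a∈𝒜ⁿ} I_a`. -/
def attract : Set ℝ := ⋂ n : ℕ, ⋃ a : Fin (n + 1) → S.A, S.cyl (List.ofFn a)

/-- The distortion fluctuation `X_a(x,y) = log|g_a'(x)| − log|g_a'(y)|`. -/
def X (l : List S.A) (x y : ℝ) : ℝ := Real.log |S.gD l x| - Real.log |S.gD l y|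

/-- The finite-scale temporal distance. -/
def Delta (a b : List S.A) (x y : ℝ) : ℝ := S.X a x y - S.X b x y

end FiniteIFS

/-- A finite fully-branched `C^{1+α}` IFS together with its dimension-`δ` Gibbs
(equilibrium) measure `μ` for the potential `δ·log|g'|`, where `δ = dim_H F`. -/
structure FiniteGibbsIFS extends FiniteIFS where
  refPt : List A → ℝ
  refPt_mem : ∀ l, refPt l ∈ toFiniteIFS.cyl l
  δ : ℝ
  hδ : δ ∈ Set.Ioo (0:ℝ) 1
  hdim : ENNReal.ofReal δ = dimH toFiniteIFS.attract
  Cstar : ℝ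
  hCstar : 1 ≤ Cstar
  hXHolder : ∀ l : List A, ∀ x ∈ Set.Icc lo hi, ∀ y ∈ Set.Icc lo hi,
    |toFiniteIFS.X l x y| ≤ Cstar * |x - y| ^ δ
  hmult : ∀ l l' : List A,
    Metric.diam (toFiniteIFS.cyl (l ++ l')) ≤
        Cstar * (Metric.diam (toFiniteIFS.cyl l) * Metric.diam (toFiniteIFS.cyl l')) ∧
      Metric.diam (toFiniteIFS.cyl l) * Metric.diam (toFiniteIFS.cyl l') ≤
        Cstar * Metric.diam (toFiniteIFS.cyl (l ++ l'))
  μ : Measure ℝ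
  hprob : IsProbabilityMeasure μ
  hsupp : μ (toFiniteIFS.attract)ᶜ = 0
  hfrostman : ∀ l : List A,
    (μ (toFiniteIFS.cyl l)).toReal ≤ Cstar * Metric.diam (toFiniteIFS.cyl l) ^ δ ∧
      Metric.diam (toFiniteIFS.cyl l) ^ δ ≤ Cstar * (μ (toFiniteIFS.cyl l)).toReal
  w : List A → ℝ → ℝ
  hw : ∀ l : List A, ∀ x ∈ Set.Icc lo hi,
    (μ (toFiniteIFS.cyl l)).toReal ≤ Cstar * w l x ∧
      w l x ≤ Cstar * (μ (toFiniteIFS.cyl l)).toReal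
  conformal : ∀ n : ℕ, ∀ f : ℝ → ℝ, Continuous f →
    ∫ x, f x ∂μ = ∑' a : Fin n → A,
      ∫ x, w (List.ofFn a) x * f (toFiniteIFS.gW (List.ofFn a) x) ∂μ

namespace FiniteGibbsIFS

variable (S : FiniteGibbsIFS)

abbrev J : Set ℝ := S.toFiniteIFS.J
abbrev gW : List S.A → ℝ → ℝ := S.toFiniteIFS.gW
abbrev gD : List S.A → ℝ → ℝ := S.toFiniteIFS.gD
abbrev cyl : List S.A → Set ℝ := S.toFiniteIFS.cyl
abbrev attract : Set ℝ := S.toFiniteIFS.attract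
abbrev X : List S.A → ℝ → ℝ → ℝ := S.toFiniteIFS.X
abbrev Delta : List S.A → List S.A → ℝ → ℝ → ℝ := S.toFiniteIFS.Delta

/-- The Measure Non-Linearity condition (MNL): for every `N ≥ 1` there are words
`a, b ∈ 𝒜^N` such that the pushforward of `μ` under `X_a(·,x₀) - X_b(·,x₀)` is
absolutely non-concentrated: it gives mass at most `C_MNL |I|` to every interval `I`,
uniformly in `x₀ ∈ F`. -/
def MNL (CM : ℝ) : Prop :=
  ∀ N : ℕ, 1 ≤ N → ∃ a b : Fin N → S.A,
    ∀ x₀ ∈ S.attract, ∀ u v : ℝ, u ≤ v →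
      S.μ {x : ℝ | x ∈ S.attract ∧
          S.X (List.ofFn a) x x₀ - S.X (List.ofFn b) x x₀ ∈ Set.Icc u v}
        ≤ ENNReal.ofReal (CM * (v - u))

end FiniteGibbsIFS

end
/-- **(MNL) implies the everywhere separation (MNL-UNI) property** (Lemma 6.1).

In the finite fully-branched `C^{1+α}` IFS setting with its dimension-`δ` Gibbs measure
`μ`, if (MNL) holds with constant `C_MNL`, then for every `N ≥ 1` there exist words
`a, b ∈ 𝒜^N` such that for every finite word `c` and every `y ∈ I_c ∩ F` there is
`x ∈ I_c ∩ F` with `|X_a(x,y) − X_b(x,y)| ≥ μ(I_c)/(3 C_MNL)`. -/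
theorem separation_of_MNL (S : FiniteGibbsIFS) (CM : ℝ) (hCM : 0 < CM)
    (hMNL : S.MNL CM) :
    ∀ N : ℕ, 1 ≤ N → ∃ a b : Fin N → S.A,
      ∀ c : List S.A, ∀ y ∈ S.cyl c ∩ S.attract,
        ∃ x ∈ S.cyl c ∩ S.attract,
          (S.μ (S.cyl c)).toReal / (3 * CM) ≤
            |S.X (List.ofFn a) x y - S.X (List.ofFn b) x y| := by
  intro N hN
  obtain ⟨a, b, hab⟩ := hMNL N hN
  refine ⟨a, b, ?_⟩
  intro c y hy
  by_contra hcon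
  push_neg at hcon
  set t := (S.μ (S.cyl c)).toReal with ht
  have htnn : 0 ≤ t := ENNReal.toReal_nonneg
  have h3CM : (0:ℝ) < 3 * CM := by positivity
  have hrnn : 0 ≤ t / (3 * CM) := div_nonneg htnn h3CM.le
  have hsub : S.cyl c ∩ S.attract ⊆ {x : ℝ | x ∈ S.attract ∧
      S.X (List.ofFn a) x y - S.X (List.ofFn b) x y ∈
        Set.Icc (-(t / (3 * CM))) (t / (3 * CM))} := by
    intro x hx
    refine ⟨hx.2, ?_⟩
    have := (hcon x hx).le
    exact abs_le.mp this
  have hmeas := hab y hy.2 (-(t / (3 * CM))) (t / (3 * CM)) (by linarith)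
  have h1 : S.μ (S.cyl c ∩ S.attract) ≤
      ENNReal.ofReal (CM * (t / (3 * CM) - -(t / (3 * CM)))) :=
    le_trans (measure_mono hsub) hmeas
  have h2 : S.μ (S.cyl c) ≤ S.μ (S.cyl c ∩ S.attract) := by
    calc S.μ (S.cyl c) ≤ S.μ ((S.cyl c ∩ S.attract) ∪ (S.attract)ᶜ) := by
          apply measure_mono
          intro x hx
          by_cases hxF : x ∈ S.attract
          · exact Or.inl ⟨hx, hxF⟩
          · exact Or.inr hxF
      _ ≤ S.μ (S.cyl c ∩ S.attract) + S.μ (S.attract)ᶜ := measure_union_le _ _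
      _ = S.μ (S.cyl c ∩ S.attract) := by rw [S.hsupp, add_zero]
  haveI := S.hprob
  have hfin : S.μ (S.cyl c) ≠ ⊤ := measure_ne_top _ _
  have hle : S.μ (S.cyl c) ≤ ENNReal.ofReal (CM * (t / (3 * CM) - -(t / (3 * CM)))) :=
    le_trans h2 h1
  have hreal : t ≤ CM * (t / (3 * CM) - -(t / (3 * CM))) := by
    have hnn : (0:ℝ) ≤ CM * (t / (3 * CM) - -(t / (3 * CM))) :=
      mul_nonneg hCM.le (by linarith)
    exact ENNReal.toReal_le_of_le_ofReal hnn hle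
  have hCMne : CM ≠ 0 := ne_of_gt hCM
  have : t ≤ 2 * t / 3 := by
    have : CM * (t / (3 * CM) - -(t / (3 * CM))) = 2 * t / 3 := by
      field_simp; ring
    linarith [hreal, this ▸ hreal]
  have ht0 : t = 0 := by linarith
  have hz : t / (3 * CM) = 0 := by rw [ht0]; exact zero_div _
  linarith [hcon y hy, abs_nonneg (S.X (List.ofFn a) y y - S.X (List.ofFn b) y y)]
end

section
/- For every t ∈ (0,1), define ψ₀(x) := (x+t)/(x+t+1), ψ₁(x) := (x+t)/(2x+2t+1), and their composition ψ₁∘ψ₀ (explicitly (ψ₁∘ψ₀)(x) = ((1+t)x + t² + 2t)/((3+2t)x + 2t² + 5t + 1)), and let x₀ := (−t+√(t²+4t))/2, x₁ := (−t+√(t²+2t))/2, x₁₀ := (−t(1+t)+√(t(1+t)(t+2)(t+3)))/(3+2t) be their respective fixed points in (0,1). Then log (ψ₁∘ψ₀)'(x₁₀) ≠ log ψ₀'(x₀) + log ψ₁'(x₁); equivalently, (t+1+√(t²+2t))·(t+2+√(t²+4t)) ≠ 2·(t²+3t+1+√(t(1+t)(t+2)(t+3))) for all t ∈ (0,1). 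-/
noncomputable section

/-- Derivative of the branch `ψ₀(x) = (x+t)/(x+t+1)` of the accelerated Lyons IFS. -/
def dpsi0 (t x : ℝ) : ℝ := 1 / (x + t + 1) ^ 2

/-- Derivative of the branch `ψ₁(x) = (x+t)/(2x+2t+1)` of the accelerated Lyons IFS. -/
def dpsi1 (t x : ℝ) : ℝ := 1 / (2 * x + 2 * t + 1) ^ 2

/-- Derivative of the composition `ψ₁ ∘ ψ₀`. -/
def dpsi10 (t x : ℝ) : ℝ := 1 / ((3 + 2 * t) * x + 2 * t ^ 2 + 5 * t + 1) ^ 2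

/-- Fixed point of `ψ₀` in `(0,1)`. -/
def fp0 (t : ℝ) : ℝ := (-t + Real.sqrt (t ^ 2 + 4 * t)) / 2

/-- Fixed point of `ψ₁` in `(0,1)`. -/
def fp1 (t : ℝ) : ℝ := (-t + Real.sqrt (t ^ 2 + 2 * t)) / 2

/-- Fixed point of `ψ₁ ∘ ψ₀` in `(0,1)`. -/
def fp10 (t : ℝ) : ℝ :=
  (-(t * (1 + t)) + Real.sqrt (t * (1 + t) * (t + 2) * (t + 3))) / (3 + 2 * t)

/-- **Non-vanishing of the cocycle obstruction for the Lyons sub-IFS.**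

For every `t ∈ (0,1)`, with `ψ₀(x) = (x+t)/(x+t+1)`, `ψ₁(x) = (x+t)/(2x+2t+1)` and their
composition `ψ₁∘ψ₀`, and with `x₀, x₁, x₁₀` the respective fixed points in `(0,1)`, we have
`log (ψ₁∘ψ₀)'(x₁₀) ≠ log ψ₀'(x₀) + log ψ₁'(x₁)`; equivalently
`(t+1+√(t²+2t))(t+2+√(t²+4t)) ≠ 2(t²+3t+1+√(t(1+t)(t+2)(t+3)))`. -/
theorem lyons_cocycle_obstruction (t : ℝ) (ht : t ∈ Set.Ioo (0:ℝ) 1) :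
    Real.log (dpsi10 t (fp10 t)) ≠ Real.log (dpsi0 t (fp0 t)) + Real.log (dpsi1 t (fp1 t)) ∧
    (t + 1 + Real.sqrt (t ^ 2 + 2 * t)) * (t + 2 + Real.sqrt (t ^ 2 + 4 * t)) ≠
      2 * (t ^ 2 + 3 * t + 1 + Real.sqrt (t * (1 + t) * (t + 2) * (t + 3))) := by
  obtain ⟨ht0, ht1⟩ := ht
  set a := Real.sqrt (t ^ 2 + 2 * t) with hadef
  set b := Real.sqrt (t ^ 2 + 4 * t) with hbdef
  set c := Real.sqrt (t * (1 + t) * (t + 2) * (t + 3)) with hcdef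
  have ha : a ^ 2 = t ^ 2 + 2 * t := Real.sq_sqrt (by nlinarith)
  have hb : b ^ 2 = t ^ 2 + 4 * t := Real.sq_sqrt (by nlinarith)
  have hc : c ^ 2 = t * (1 + t) * (t + 2) * (t + 3) := Real.sq_sqrt (by nlinarith)
  have ha0 : 0 ≤ a := Real.sqrt_nonneg _
  have hb0 : 0 ≤ b := Real.sqrt_nonneg _
  have hc0 : 0 ≤ c := Real.sqrt_nonneg _
  -- a < t + 2 and lower bounds
  have hat : t < a := by nlinarith
  have hbt : 2 * t < (t + 1) * b := by nlinarith
  have hab : a < t + 2 := by nlinarith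
  -- key lower bound for part 1
  have hpq : 2 * t ^ 2 + 7 * t + 2 < (t + 1 + a) * (t + 2 + b) := by nlinarith
  -- part 2: the explicit inequality
  have key2 : (t + 1 + a) * (t + 2 + b) ≠ 2 * (t ^ 2 + 3 * t + 1 + c) := by
    intro h
    have e1 : (2 * a + t - b) ^ 2 = 0 := by
      linear_combination (2 * (t + 2) * (t + 2 + b) + b ^ 2 - t ^ 2 - 4 * t) * ha
        + (2 * (t + 1) * (t + 1 + a)) * hb - 4 * hc
        - ((t + 1 + a) * (t + 2 + b) - 2 * (t ^ 2 + 3 * t + 1) + 2 * c) * h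
    have e2 : 2 * a + t - b = 0 := by
      have := sq_eq_zero_iff.mp e1
      linarith [this]
    nlinarith [ha, hb, ha0, ht0]
  -- part 1: the analogous inequality with `t² + 4t + 1` in place of `t² + 3t + 1`
  have key1 : (t + 1 + a) * (t + 2 + b) ≠ 2 * (t ^ 2 + 4 * t + 1 + c) := by
    intro h
    have e1 : (2 * a + t - b) ^ 2
        = 4 * t * (2 * t ^ 2 + 7 * t + 2 - (t + 1 + a) * (t + 2 + b)) := by
      linear_combination (2 * (t + 2) * (t + 2 + b) + b ^ 2 - t ^ 2 - 4 * t) * ha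
        + (2 * (t + 1) * (t + 1 + a)) * hb - 4 * hc
        - ((t + 1 + a) * (t + 2 + b) - 2 * (t ^ 2 + 4 * t + 1) + 2 * c) * h
    nlinarith [sq_nonneg (2 * a + t - b), hpq, ht0]
  refine ⟨?_, key2⟩
  -- now the logarithmic statement
  have h32 : (3 + 2 * t) ≠ 0 := by positivity
  have hX : dpsi10 t (fp10 t) = 1 / (t ^ 2 + 4 * t + 1 + c) ^ 2 := by
    have : (3 + 2 * t) * fp10 t + 2 * t ^ 2 + 5 * t + 1 = t ^ 2 + 4 * t + 1 + c := by
      rw [fp10, ← hcdef]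
      field_simp
      ring
    rw [dpsi10, this]
  have hY : dpsi0 t (fp0 t) = 1 / ((t + 2 + b) / 2) ^ 2 := by
    have : fp0 t + t + 1 = (t + 2 + b) / 2 := by rw [fp0, ← hbdef]; ring
    rw [dpsi0, this]
  have hZ : dpsi1 t (fp1 t) = 1 / (t + 1 + a) ^ 2 := by
    have : 2 * fp1 t + 2 * t + 1 = t + 1 + a := by rw [fp1, ← hadef]; ring
    rw [dpsi1, this]
  have hXpos : (0:ℝ) < t ^ 2 + 4 * t + 1 + c := by positivity
  have hYpos : (0:ℝ) < (t + 2 + b) / 2 := by positivity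
  have hZpos : (0:ℝ) < t + 1 + a := by positivity
  rw [hX, hY, hZ]
  simp only [one_div, Real.log_inv, Real.log_pow]
  intro h
  have hlog : Real.log (t ^ 2 + 4 * t + 1 + c)
      = Real.log (((t + 2 + b) / 2) * (t + 1 + a)) := by
    rw [Real.log_mul (ne_of_gt hYpos) (ne_of_gt hZpos)]
    push_cast at h
    linarith
  have hXeq : t ^ 2 + 4 * t + 1 + c = ((t + 2 + b) / 2) * (t + 1 + a) := by
    have := congrArg Real.exp hlog
    rwa [Real.exp_log hXpos, Real.exp_log (by positivity)] at this
  apply key1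
  linarith [hXeq]
end
end

section
/- Let t ∈ (0,1), f₀(x) := x/(1+x) and f_t(x) := (x+t)/(1+x+t) on [0,1], and for n ≥ 0 let ψ_n^t := f₀ⁿ ∘ f_t (the n-fold iterate of f₀ composed with f_t); explicitly ψ_n^t(x) = (x+t)/((n+1)(x+t)+1). If ν is a Borel probability measure on [0,1] satisfying ν = (1/2)(f₀)_*ν + (1/2)(f_t)_*ν, then ν = Σ_{n=0}^∞ 2^{−(n+1)} (ψ_n^t)_*ν. -/
open MeasureTheory
open scoped ENNReal

/-- **Inducing the Lyons IFS on the parabolic branch.**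

Let `t ∈ (0,1)`, `f₀(x) = x/(1+x)`, `f_t(x) = (x+t)/(1+x+t)`, and for `n ≥ 0` let
`ψₙᵗ = f₀ⁿ ∘ f_t`.  If `ν` is a Borel probability measure on `[0,1]` with
`ν = ½ (f₀)_*ν + ½ (f_t)_*ν`, then `ν = Σₙ 2^{-(n+1)} (ψₙᵗ)_*ν`. -/
theorem lyons_induced_invariance (t : ℝ) (ht : t ∈ Set.Ioo (0:ℝ) 1)
    (ν : Measure ℝ) [IsProbabilityMeasure ν]
    (hsupp : ν (Set.Icc (0:ℝ) 1)ᶜ = 0)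
    (hconf : ν = (1/2 : ℝ≥0∞) • Measure.map (fun x : ℝ => x / (1 + x)) ν
               + (1/2 : ℝ≥0∞) • Measure.map (fun x : ℝ => (x + t) / (1 + x + t)) ν) :
    ν = Measure.sum (fun n : ℕ =>
      ((1/2 : ℝ≥0∞) ^ (n + 1)) •
        Measure.map
          ((fun x : ℝ => x / (1 + x))^[n] ∘ (fun x : ℝ => (x + t) / (1 + x + t))) ν) := by
  set f0 : ℝ → ℝ := fun x : ℝ => x / (1 + x) with hf0
  set ft : ℝ → ℝ := fun x : ℝ => (x + t) / (1 + x + t) with hft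
  have mf0 : Measurable f0 := measurable_id.div (measurable_const.add measurable_id)
  have mft : Measurable ft :=
    (measurable_id.add measurable_const).div
      ((measurable_const.add measurable_id).add measurable_const)
  have miter : ∀ n, Measurable (f0^[n]) := fun n => mf0.iterate n
  have key : ∀ N : ℕ, ν = ((1/2:ℝ≥0∞)^N) • Measure.map (f0^[N]) ν
      + ∑ n ∈ Finset.range N, ((1/2:ℝ≥0∞)^(n+1)) • Measure.map (f0^[n] ∘ ft) ν := by
    intro N
    induction N with
    | zero => simp [Measure.map_id]
    | succ N ih =>
      have h1 : Measure.map (f0^[N]) ν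
          = (1/2:ℝ≥0∞) • Measure.map (f0^[N+1]) ν
            + (1/2:ℝ≥0∞) • Measure.map (f0^[N] ∘ ft) ν := by
        conv_lhs => rw [hconf]
        rw [Measure.map_add _ _ (miter N), Measure.map_smul, Measure.map_smul,
          Measure.map_map (miter N) mf0, Measure.map_map (miter N) mft,
          ← Function.iterate_succ]
      calc ν = ((1/2:ℝ≥0∞)^N) • Measure.map (f0^[N]) ν
              + ∑ n ∈ Finset.range N, ((1/2:ℝ≥0∞)^(n+1)) • Measure.map (f0^[n] ∘ ft) ν := ih
        _ = ((1/2:ℝ≥0∞)^(N+1)) • Measure.map (f0^[N+1]) ν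
              + ∑ n ∈ Finset.range (N+1), ((1/2:ℝ≥0∞)^(n+1)) • Measure.map (f0^[n] ∘ ft) ν := by
            rw [h1, smul_add, smul_smul, smul_smul, Finset.sum_range_succ, pow_succ]
            ring_nf
            abel
  ext s hs
  rw [Measure.sum_apply _ hs]
  set a : ℕ → ℝ≥0∞ := fun n => (((1/2:ℝ≥0∞)^(n+1)) • Measure.map (f0^[n] ∘ ft) ν) s with ha
  have hkey' : ∀ N : ℕ, ν s = ((1/2:ℝ≥0∞)^N) * Measure.map (f0^[N]) ν s
      + ∑ n ∈ Finset.range N, a n := by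
    intro N
    conv_lhs => rw [key N]
    simp [Measure.add_apply, Measure.smul_apply, ha, Measure.finset_sum_apply]
  refine le_antisymm ?_ ?_
  · -- ν s ≤ ∑' n, a n
    have hrem : ∀ N : ℕ, ν s ≤ (∑' n, a n) + (1/2:ℝ≥0∞)^N := by
      intro N
      rw [hkey' N]
      have h1 : ((1/2:ℝ≥0∞)^N) * Measure.map (f0^[N]) ν s ≤ (1/2:ℝ≥0∞)^N := by
        calc ((1/2:ℝ≥0∞)^N) * Measure.map (f0^[N]) ν s
            ≤ ((1/2:ℝ≥0∞)^N) * 1 := by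
              refine mul_le_mul_right ?_ _
              rw [Measure.map_apply (miter N) hs]
              exact prob_le_one
          _ = (1/2:ℝ≥0∞)^N := mul_one _
      have h2 : ∑ n ∈ Finset.range N, a n ≤ ∑' n, a n := ENNReal.sum_le_tsum _
      calc ((1/2:ℝ≥0∞)^N) * Measure.map (f0^[N]) ν s + ∑ n ∈ Finset.range N, a n
          ≤ (1/2:ℝ≥0∞)^N + ∑' n, a n := add_le_add h1 h2
        _ = (∑' n, a n) + (1/2:ℝ≥0∞)^N := add_comm _ _
    have hlim : Filter.Tendsto (fun N : ℕ => (∑' n, a n) + (1/2:ℝ≥0∞)^N)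
        Filter.atTop (nhds ((∑' n, a n) + 0)) := by
      exact Filter.Tendsto.const_add _
        (ENNReal.tendsto_pow_atTop_nhds_zero_of_lt_one (by norm_num))
    rw [add_zero] at hlim
    exact ge_of_tendsto hlim (Filter.Eventually.of_forall hrem)
  · -- ∑' n, a n ≤ ν s
    rw [ENNReal.tsum_eq_iSup_sum]
    refine iSup_le fun I => ?_
    calc ∑ n ∈ I, a n ≤ ∑ n ∈ Finset.range (I.sup id + 1), a n := by
          refine Finset.sum_le_sum_of_subset ?_
          intro n hn
          exact Finset.mem_range.mpr (Nat.lt_succ_of_le (Finset.le_sup (f := id) hn))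
      _ ≤ ν s := by
          rw [hkey' (I.sup id + 1)]
          exact le_add_self
end
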